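/- Let σ(z) = 1/(1+e^{-z}) and define r : ℕ → ℝ by r(0)=0, r(t+1)=r(t)+σ(-2r(t)). Then there is a constant C such that for all k ≥ 1, |r(k) - (1/2) log k| ≤ C. -/

import Mathlib

private lemma phi_hasDeriv (x : ℝ) :
    HasDerivAt (fun x : ℝ => x + (1 + Real.exp (2*x))⁻¹)
      (1 + (-(Real.exp (2*x) * 2) / (1 + Real.exp (2*x))^2)) x := by
  have h1 : HasDerivAt (fun x : ℝ => 2*x) 2 x := by
    simpa using (hasDerivAt_id x).const_mul 2
  have h3 : HasDerivAt (fun x : ℝ => 1 + Real.exp (2*x)) (Real.exp (2*x) * 2) x :=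
    h1.exp.const_add 1
  have hne : (1 + Real.exp (2*x)) ≠ 0 := by positivity
  exact (hasDerivAt_id x).add (h3.inv hne)

private lemma phi_mono : Monotone (fun x : ℝ => x + (1 + Real.exp (2*x))⁻¹) := by
  apply monotone_of_deriv_nonneg
  · exact fun x => (phi_hasDeriv x).differentiableAt
  · intro x
    rw [(phi_hasDeriv x).deriv]
    have h := Real.exp_pos (2*x)
    have hsq : (0:ℝ) < (1 + Real.exp (2*x))^2 := by positivity
    have : Real.exp (2*x) * 2 / (1 + Real.exp (2*x))^2 ≤ 1 := by
      rw [div_le_one hsq]; nlinarith [sq_nonneg (1 - Real.exp (2*x))]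
    have hdiv : -(Real.exp (2*x) * 2) / (1 + Real.exp (2*x))^2
        = -(Real.exp (2*x) * 2 / (1 + Real.exp (2*x))^2) := by ring
    rw [hdiv]; linarith

theorem rating_half_log (σ : ℝ → ℝ)
    (hσ : ∀ z, σ z = 1 / (1 + Real.exp (-z)))
    (r : ℕ → ℝ) (hr0 : r 0 = 0) (hrec : ∀ t, r (t + 1) = r t + σ (-2 * r t)) :
    ∃ C : ℝ, ∀ k : ℕ, 1 ≤ k → |r k - (1 / 2) * Real.log k| ≤ C := by
  have hstep : ∀ t : ℕ, r (t+1) = r t + (1 + Real.exp (2 * r t))⁻¹ := by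
    intro t
    rw [hrec t, hσ]
    norm_num
  -- key sandwich by induction
  have key : ∀ t : ℕ, (1/2) * Real.log ((t:ℝ)+1) ≤ r t ∧
      r t ≤ (1/2) * Real.log ((t:ℝ)+1) + Real.log 2 := by
    intro t
    induction t with
    | zero =>
      simp [hr0]
      exact Real.log_nonneg (by norm_num)
    | succ t ih =>
      obtain ⟨hL, hU⟩ := ih
      set n : ℝ := (t:ℝ) + 1 with hn
      have hn1 : (1:ℝ) ≤ n := by have := Nat.cast_nonneg (α := ℝ) t; linarith
      have hn0 : (0:ℝ) < n := by linarith
      push_cast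
      constructor
      · -- lower bound
        have h1 := phi_mono hL
        simp only at h1
        rw [← hstep t] at h1
        have hexp : Real.exp (2 * ((1/2) * Real.log n)) = n := by
          rw [show 2 * ((1/2) * Real.log n) = Real.log n by ring, Real.exp_log hn0]
        rw [hexp] at h1
        -- need (1/2) * log (n+1) ≤ (1/2)*log n + (1+n)⁻¹
        have hlog : Real.log (n+1) - Real.log n ≤ 1/n := by
          rw [← Real.log_div (by linarith) (by linarith)]
          have := Real.log_le_sub_one_of_pos (show (0:ℝ) < (n+1)/n by positivity)
          have heq : (n+1)/n - 1 = 1/n := by field_simp; ring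
          linarith [heq ▸ this]
        have h2 : 1/n ≤ 2 * (1+n)⁻¹ := by
          rw [inv_eq_one_div, show 2*(1/(1+n)) = 2/(1+n) by ring,
            div_le_div_iff₀ hn0 (by linarith)]
          linarith
        have : (1/2) * Real.log (n+1) ≤ (1/2) * Real.log n + (1+n)⁻¹ := by linarith
        linarith
      · -- upper bound
        have h1 := phi_mono hU
        simp only at h1
        rw [← hstep t] at h1
        have hexp : Real.exp (2 * ((1/2) * Real.log n + Real.log 2)) = 4 * n := by
          rw [show 2 * ((1/2) * Real.log n + Real.log 2) = Real.log n + 2 * Real.log 2 by ring,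
            Real.exp_add, Real.exp_log hn0]
          rw [show (2:ℝ) * Real.log 2 = Real.log (2^2) by rw [Real.log_pow]; push_cast; ring]
          rw [Real.exp_log (by norm_num)]
          ring
        rw [hexp] at h1
        have hlog : 1/(n+1) ≤ Real.log (n+1) - Real.log n := by
          have := Real.log_le_sub_one_of_pos (show (0:ℝ) < n/(n+1) by positivity)
          rw [Real.log_div (by linarith) (by linarith)] at this
          have heq : n/(n+1) - 1 = -(1/(n+1)) := by field_simp; ring
          linarith [heq ▸ this]
        have h2 : (1 + 4*n)⁻¹ ≤ (1/2) * (1/(n+1)) := by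
          rw [inv_eq_one_div, show (1/2)*(1/(n+1)) = 1/(2*(n+1)) by field_simp,
            div_le_div_iff₀ (by linarith) (by linarith)]
          linarith
        have : (1+4*n)⁻¹ ≤ (1/2) * Real.log (n+1) - (1/2) * Real.log n := by linarith
        linarith
  refine ⟨2, fun k hk => ?_⟩
  obtain ⟨hL, hU⟩ := key k
  have hk1 : (1:ℝ) ≤ (k:ℝ) := by exact_mod_cast hk
  have hk0 : (0:ℝ) < (k:ℝ) := by linarith
  have hlog1 : Real.log (k:ℝ) ≤ Real.log ((k:ℝ)+1) :=
    Real.log_le_log (by linarith) (by linarith)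
  have hlog2 : Real.log ((k:ℝ)+1) ≤ Real.log 2 + Real.log (k:ℝ) := by
    rw [← Real.log_mul (by norm_num) (by linarith)]
    exact Real.log_le_log (by linarith) (by linarith)
  have hl2 : Real.log 2 ≤ 1 := by linarith [Real.log_le_sub_one_of_pos (show (0:ℝ)<2 by norm_num)]
  rw [abs_le]
  constructor <;> linarith
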